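/- (Bounded Real Lemma, sufficiency part.) Let L, H, V, N, Z be bounded operators on a complex Hilbert space with H self-adjoint and V self-adjoint nonnegative, let g > 0 and λ ≥ 0 be real numbers, and set Γ = g²·I − Z*Z. Suppose there is a real c > 0 with Γ ≥ c·I (so Γ is invertible with bounded inverse Γ⁻¹), and suppose 𝓛_L(V) − i[V, H] + N*N + ([L*, V] + N*Z)Γ⁻¹([V, L] + Z*N) − λ·I ≤ 0. Then for every bounded operator w, 𝓛_L(V) − i[V, H] − w*Γw + w*([V, L] + Z*N) + ([L*, V] + N*Z)w + N*N − λ·I ≤ 0. -/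

import Mathlib

noncomputable section

open Finset
open scoped ComplexOrder

variable {E : Type*} [NormedAddCommGroup E] [InnerProductSpace ℂ E] [CompleteSpace E]

/-- Operator ordering: `A ≤ B` iff `⟨ψ, Aψ⟩ ≤ ⟨ψ, Bψ⟩` for all `ψ`. -/
def opLE (A B : E →L[ℂ] E) : Prop :=
  ∀ ψ : E, (inner ℂ ψ (A ψ) : ℂ) ≤ (inner ℂ ψ (B ψ) : ℂ)

/-- The single-channel Lindblad superoperator `𝓛_L(X) = (1/2)(L*[X,L] + [L*,X]L)`. -/
def lind1 (L X : E →L[ℂ] E) : E →L[ℂ] E :=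
  (2 : ℂ)⁻¹ • (star L * ⁅X, L⁆ + ⁅star L, X⁆ * L)

private lemma loewner_nonneg_of_inner (T : E →L[ℂ] E)
    (h0 : ∀ x : E, (0:ℂ) ≤ inner ℂ x (T x)) : (0 : E →L[ℂ] E) ≤ T := by
  rw [ContinuousLinearMap.le_def, sub_zero, ContinuousLinearMap.isPositive_iff_complex]
  intro x
  have h := h0 x
  rw [Complex.le_def] at h
  have him : (inner ℂ x (T x) : ℂ).im = 0 := by simpa using h.2.symm
  have hre : 0 ≤ (inner ℂ x (T x) : ℂ).re := by simpa using h.1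
  have hconj : (inner ℂ (T x) x : ℂ) = inner ℂ x (T x) := by
    rw [← inner_conj_symm (T x) x]
    exact Complex.conj_eq_iff_im.mpr him
  constructor
  · rw [hconj]
    exact Complex.conj_eq_iff_re.mp (by rw [Complex.conj_eq_iff_im.mpr him])
  · rw [hconj]; exact hre

/-- Bounded Real Lemma, sufficiency: with `Γ = g²I − Z*Z`, if `Γ ≥ cI`
for some `c > 0` (so `Γ` is invertible; `Γ⁻¹` is `Ring.inverse Γ`) and
`𝓛_L(V) − i[V,H] + N*N + ([L*,V] + N*Z)Γ⁻¹([V,L] + Z*N) − λI ≤ 0`, then for every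
bounded operator `w`,
`𝓛_L(V) − i[V,H] − w*Γw + w*([V,L] + Z*N) + ([L*,V] + N*Z)w + N*N − λI ≤ 0`. -/
theorem stmt_10
    (L Hm V N Z : E →L[ℂ] E) (g lam c : ℝ)
    (hHm : IsSelfAdjoint Hm) (hV : IsSelfAdjoint V)
    (hVpos : ∀ ψ : E, 0 ≤ (inner ℂ ψ (V ψ) : ℂ))
    (hg : 0 < g) (hlam : 0 ≤ lam) (hc : 0 < c)
    (hΓ : opLE ((c : ℂ) • 1) ((g : ℂ) ^ 2 • 1 - star Z * Z))
    (h : opLE (lind1 L V + (-Complex.I) • ⁅V, Hm⁆ + star N * N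
      + (⁅star L, V⁆ + star N * Z)
          * Ring.inverse ((g : ℂ) ^ 2 • 1 - star Z * Z) * (⁅V, L⁆ + star Z * N)
      - (lam : ℂ) • 1) 0) :
    ∀ w : E →L[ℂ] E,
      opLE (lind1 L V + (-Complex.I) • ⁅V, Hm⁆
        - star w * ((g : ℂ) ^ 2 • 1 - star Z * Z) * w
        + star w * (⁅V, L⁆ + star Z * N) + (⁅star L, V⁆ + star N * Z) * w
        + star N * N - (lam : ℂ) • 1) 0 := by
  intro w ψ
  set Γ : E →L[ℂ] E := (g : ℂ) ^ 2 • 1 - star Z * Z with hΓdef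
  set M : E →L[ℂ] E := ⁅V, L⁆ + star Z * N with hMdef
  -- Γ is self-adjoint
  have hΓsa : IsSelfAdjoint Γ := by
    rw [hΓdef, IsSelfAdjoint]
    simp [star_smul, Complex.star_def, ← Complex.ofReal_pow, Complex.conj_ofReal, mul_assoc]
  -- [L*,V] + N*Z = star M
  have hM' : ⁅star L, V⁆ + star N * Z = star M := by
    rw [hMdef]
    simp only [star_add, star_mul, star_star]
    congr 1
    show _ = star (V * L - L * V)
    rw [star_sub, star_mul, star_mul, hV.star_eq]
    rfl
  -- c•1 ≤ Γ in the Loewner order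
  have hle : (c : ℂ) • (1 : E →L[ℂ] E) ≤ Γ := by
    have := loewner_nonneg_of_inner (Γ - (c : ℂ) • 1) (fun x => by
      have h1 := hΓ x
      rw [← sub_nonneg] at h1
      simpa [ContinuousLinearMap.sub_apply, inner_sub_right] using h1)
    exact sub_nonneg.mp this
  have hc1pos : (0 : E →L[ℂ] E) ≤ (c : ℂ) • 1 := by
    apply loewner_nonneg_of_inner
    intro x
    rw [ContinuousLinearMap.smul_apply, ContinuousLinearMap.one_apply, inner_smul_right,
      inner_self_eq_norm_sq_to_K]
    exact mul_nonneg (by exact_mod_cast hc.le) (by positivity)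
  have hc1unit : IsUnit ((c : ℂ) • (1 : E →L[ℂ] E)) := by
    rw [← Algebra.algebraMap_eq_smul_one]
    exact (isUnit_iff_ne_zero.mpr (by exact_mod_cast hc.ne')).map (algebraMap ℂ (E →L[ℂ] E))
  have hU : IsUnit Γ := CStarAlgebra.isUnit_of_le _ hle ⟨hc1pos, hc1unit⟩
  set J : E →L[ℂ] E := Ring.inverse Γ with hJdef
  have hJΓ : J * Γ = 1 := Ring.inverse_mul_cancel _ hU
  have hΓJ : Γ * J = 1 := Ring.mul_inverse_cancel _ hU
  have hJsa : star J = J := by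
    have h1 : star J * Γ = 1 := by
      rw [← hΓsa.star_eq, ← star_mul, hΓJ, star_one]
    calc star J = star J * (Γ * J) := by rw [hΓJ, mul_one]
    _ = (star J * Γ) * J := by rw [mul_assoc]
    _ = J := by rw [h1, one_mul]
  set d : E →L[ℂ] E := w - J * M with hddef
  -- completion of squares
  have hexp : star d * (Γ * d) =
      star w * (Γ * w) - star w * M - star M * w + star M * (J * M) := by
    have h1 : Γ * d = Γ * w - M := by
      rw [hddef, mul_sub, ← mul_assoc, hΓJ, one_mul]
    have h2 : star d = star w - star M * J := by
      rw [hddef, star_sub, star_mul, hJsa]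
    rw [h1, h2]
    rw [sub_mul, mul_sub, mul_sub]
    rw [mul_assoc (star M) J (Γ * w), ← mul_assoc J Γ w, hJΓ, one_mul]
    abel
  -- the operator identity
  have hopeq : lind1 L V + (-Complex.I) • ⁅V, Hm⁆
        - star w * Γ * w + star w * M + star M * w + star N * N - (lam : ℂ) • 1
      = (lind1 L V + (-Complex.I) • ⁅V, Hm⁆ + star N * N + star M * J * M - (lam : ℂ) • 1)
        - star d * (Γ * d) := by
    rw [hexp, mul_assoc (star w) Γ w, mul_assoc (star M) J M]
    abel
  rw [hM']
  rw [hopeq]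
  -- now evaluate at ψ
  have hpos : (0 : ℂ) ≤ inner ℂ ψ ((star d * (Γ * d)) ψ) := by
    have : (inner ℂ ψ ((star d * (Γ * d)) ψ) : ℂ) = inner ℂ (d ψ) (Γ (d ψ)) := by
      rw [ContinuousLinearMap.mul_apply, ContinuousLinearMap.star_eq_adjoint,
        ContinuousLinearMap.adjoint_inner_right]
      rfl
    rw [this]
    have h1 := hΓ (d ψ)
    refine le_trans ?_ h1
    rw [ContinuousLinearMap.smul_apply, ContinuousLinearMap.one_apply, inner_smul_right,
      inner_self_eq_norm_sq_to_K]
    exact mul_nonneg (by exact_mod_cast hc.le) (by positivity)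
  have hh := h ψ
  rw [hM'] at hh
  have hfin : (inner ℂ ψ ((lind1 L V + (-Complex.I) • ⁅V, Hm⁆ + star N * N + star M * J * M
        - (lam : ℂ) • 1) ψ) : ℂ) - inner ℂ ψ ((star d * (Γ * d)) ψ)
      ≤ inner ℂ ψ ((0 : E →L[ℂ] E) ψ) :=
    le_trans (sub_le_self _ hpos) hh
  simpa [ContinuousLinearMap.sub_apply, inner_sub_right] using hfin
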